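/- arXiv:2503.14658 — 4 statements merged into one kernel-verified Lean document; each statement's English description precedes it below -/
import Mathlib

section
/- Let Z and W be Polish spaces, (z_t)_t a Markov process on Z and (z_t,w_t)_t a Markov process on Z×W whose projection onto Z is (z_t)_t. Assume the Markov semigroup of (z_t,w_t)_t is strong Feller on Z×W. Let ν be an ergodic invariant measure for (z_t)_t, and let μ be a Borel probability measure on W with connected support such that the product measure ν ⊗ μ is invariant for (z_t,w_t)_t. Then ν ⊗ μ is an ergodic measure for (z_t,w_t)_t. -/
open MeasureTheory ProbabilityTheory
open scoped ENNReal symmDiff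

/-- Strong Feller property of a Markov semigroup indexed by `t > 0`. -/
def IsStrongFeller4 {X : Type*} [MeasurableSpace X] [TopologicalSpace X]
    (P : ℝ → Kernel X X) : Prop :=
  ∀ t : ℝ, 0 < t → ∀ φ : X → ℝ, Measurable φ → (∃ C, ∀ x, |φ x| ≤ C) →
    Continuous fun x => ∫ y, φ y ∂(P t x)

/-- Invariance of a measure under a Markov semigroup. -/
def IsInvariant4 {X : Type*} [MeasurableSpace X] (P : ℝ → Kernel X X)
    (m : Measure X) : Prop :=
  ∀ t : ℝ, 0 < t → m.bind (P t) = m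

/-- Ergodicity of an invariant measure: any set `E` with `P_t 1_E = 1_E` `m`-a.e. for
all `t > 0` has measure `0` or `1`. -/
def IsErgodic4 {X : Type*} [MeasurableSpace X] (P : ℝ → Kernel X X)
    (m : Measure X) : Prop :=
  IsInvariant4 P m ∧
    ∀ E : Set X, MeasurableSet E →
      (∀ t : ℝ, 0 < t → ∀ᵐ x ∂m, P t x E = E.indicator (fun _ => (1 : ℝ≥0∞)) x) →
      m E = 0 ∨ m E = 1

/-- Topological support of a measure. -/
def measSupp4 {X : Type*} [MeasurableSpace X] [TopologicalSpace X] (m : Measure X) :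
    Set X :=
  {x | ∀ U : Set X, IsOpen U → x ∈ U → 0 < m U}

lemma measSupp4_compl_eq {X : Type*} [MeasurableSpace X] [TopologicalSpace X]
    (m : Measure X) :
    (measSupp4 m)ᶜ = ⋃₀ {U : Set X | IsOpen U ∧ m U = 0} := by
  ext x
  simp only [measSupp4, Set.mem_compl_iff, Set.mem_setOf_eq, not_forall, Set.mem_sUnion]
  constructor
  · rintro ⟨U, hUo, hxU, hpos⟩
    exact ⟨U, ⟨hUo, by simpa [pos_iff_ne_zero, not_not] using hpos⟩, hxU⟩
  · rintro ⟨U, ⟨hUo, hU0⟩, hxU⟩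
    exact ⟨U, hUo, hxU, by simp [hU0]⟩

lemma measSupp4_compl_null {X : Type*} [MeasurableSpace X] [TopologicalSpace X]
    [SecondCountableTopology X] (m : Measure X) : m (measSupp4 m)ᶜ = 0 := by
  obtain ⟨T, hTc, hTsub, hTeq⟩ :=
    TopologicalSpace.isOpen_sUnion_countable {U : Set X | IsOpen U ∧ m U = 0}
      (fun U hU => hU.1)
  rw [measSupp4_compl_eq, ← hTeq]
  exact (measure_sUnion_null_iff hTc).2 fun U hU => (hTsub hU).2

lemma pre01 {S : Set ℝ} (h : IsPreconnected S) (hS : S ⊆ {0, 1}) :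
    S.Subsingleton := by
  intro a ha b hb
  by_contra hab
  have h0 : (0 : ℝ) ∈ S ∧ (1 : ℝ) ∈ S := by
    rcases hS ha with h1 | h1 <;> rcases hS hb with h2 | h2 <;>
      simp_all
  have := h (Set.Iio (1/2)) (Set.Ioi (1/2)) isOpen_Iio isOpen_Ioi
    (fun x hx => by
      rcases hS hx with h | h
      · subst h; exact Or.inl (by norm_num)
      · rw [Set.mem_singleton_iff] at h; subst h; exact Or.inr (by norm_num))
    ⟨0, h0.1, by norm_num⟩ ⟨1, h0.2, by norm_num⟩
  obtain ⟨x, -, hx1, hx2⟩ := this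
  exact absurd (lt_trans (Set.mem_Iio.mp hx1) (Set.mem_Ioi.mp hx2)) (lt_irrefl _)

/-- Let `Z, W` be Polish spaces, `P` the Markov semigroup of a process
on `Z` and `Q` the Markov semigroup of a process on `Z × W` projecting onto the first.
If `Q` is strong Feller, `ν` is an ergodic measure for `P`, and `μ` is a measure on `W`
with connected support such that `ν ⊗ μ` is invariant for `Q`, then `ν ⊗ μ` is ergodic
for `Q`. -/
theorem stmt4 {Z W : Type*}
    [MeasurableSpace Z] [TopologicalSpace Z] [PolishSpace Z] [BorelSpace Z]
    [MeasurableSpace W] [TopologicalSpace W] [PolishSpace W] [BorelSpace W]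
    (P : ℝ → Kernel Z Z) (Q : ℝ → Kernel (Z × W) (Z × W))
    (hP : ∀ t, IsMarkovKernel (P t)) (hQ : ∀ t, IsMarkovKernel (Q t))
    (hproj : ∀ t : ℝ, 0 < t → ∀ p : Z × W, (Q t p).map Prod.fst = P t p.1)
    (hFeller : IsStrongFeller4 Q)
    (ν : Measure Z) [IsProbabilityMeasure ν] (hν : IsErgodic4 P ν)
    (μ : Measure W) [IsProbabilityMeasure μ] (hconn : IsConnected (measSupp4 μ))
    (hprodinv : IsInvariant4 Q (ν.prod μ)) :
    IsErgodic4 Q (ν.prod μ) := by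
  refine ⟨hprodinv, ?_⟩
  intro E hE hEinv
  obtain ⟨w₀, hw₀⟩ := hconn.nonempty
  -- the continuous version of the indicator of `E`
  have hφmeas : Measurable (E.indicator fun _ => (1 : ℝ)) := measurable_const.indicator hE
  set f : Z × W → ℝ := fun p => ∫ y, E.indicator (fun _ => (1 : ℝ)) y ∂(Q 1 p) with hfdef
  have hfcont : Continuous f :=
    hFeller 1 one_pos _ hφmeas ⟨1, fun x => by
      by_cases h : x ∈ E <;> simp [Set.indicator_apply, h]⟩
  have hfeq : ∀ p, f p = (Q 1 p E).toReal := by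
    intro p
    rw [hfdef]
    simp only [integral_indicator_const (1 : ℝ) hE, smul_eq_mul, mul_one]
    rfl
  have hfae : ∀ᵐ p ∂(ν.prod μ), f p = E.indicator (fun _ => (1 : ℝ)) p := by
    filter_upwards [hEinv 1 one_pos] with p hp
    rw [hfeq, hp]
    by_cases h : p ∈ E <;> simp [Set.indicator_apply, h]
  -- the open set where `f ∉ {0,1}` is null, hence misses the support
  have hVopen : IsOpen {p : Z × W | f p ∉ ({0, 1} : Set ℝ)} := by
    have hcl : IsClosed ({0, 1} : Set ℝ) :=
      ((Set.finite_singleton (1:ℝ)).insert 0).isClosed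
    exact hcl.isOpen_compl.preimage hfcont
  have hVnull : (ν.prod μ) {p : Z × W | f p ∉ ({0, 1} : Set ℝ)} = 0 := by
    refine measure_mono_null ?_ (ae_iff.mp hfae)
    intro p hp
    simp only [Set.mem_setOf_eq] at hp ⊢
    intro hc
    rw [hc] at hp
    by_cases h : p ∈ E <;> simp [Set.indicator_apply, h] at hp
  have hprodsupp : (measSupp4 ν) ×ˢ (measSupp4 μ) ⊆ measSupp4 (ν.prod μ) := by
    rintro ⟨z, w⟩ ⟨hz, hw⟩ U hUo hU
    obtain ⟨u, v, hu, hv, hzu, hwv, huv⟩ := isOpen_prod_iff.mp hUo z w hU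
    refine lt_of_lt_of_le ?_ (measure_mono huv)
    rw [Measure.prod_prod]
    exact ENNReal.mul_pos (hz u hu hzu).ne' (hw v hv hwv).ne'
  have h01 : ∀ p ∈ measSupp4 (ν.prod μ), f p ∈ ({0, 1} : Set ℝ) := by
    intro p hp
    by_contra h
    have := hp _ hVopen h
    rw [hVnull] at this
    exact lt_irrefl _ this
  -- `f` is constant on the fibers over the support of `ν`
  have hconst : ∀ z ∈ measSupp4 ν, ∀ w ∈ measSupp4 μ, f (z, w) = f (z, w₀) := by
    intro z hz w hw
    have hcont' : Continuous fun w : W => f (z, w) := hfcont.comp (Continuous.prodMk_right z)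
    have hpre : IsPreconnected ((fun w : W => f (z, w)) '' measSupp4 μ) :=
      hconn.isPreconnected.image _ hcont'.continuousOn
    have hsub : (fun w : W => f (z, w)) '' measSupp4 μ ⊆ {0, 1} := by
      rintro x ⟨w', hw', rfl⟩
      exact h01 _ (hprodsupp ⟨hz, hw'⟩)
    exact pre01 hpre hsub ⟨w, hw, rfl⟩ ⟨w₀, hw₀, rfl⟩
  set g : Z → ℝ := fun z => f (z, w₀) with hgdef
  have hgcont : Continuous g := hfcont.comp (continuous_id.prodMk continuous_const)
  set F : Set Z := {z | (1 : ℝ) / 2 < g z} with hFdef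
  have hFopen : IsOpen F := isOpen_lt continuous_const hgcont
  have hFmeas : MeasurableSet F := hFopen.measurableSet
  -- the support has full measure
  have hsupp_ae : ∀ᵐ p ∂(ν.prod μ), p.1 ∈ measSupp4 ν ∧ p.2 ∈ measSupp4 μ := by
    have h1 : ∀ᵐ p ∂(ν.prod μ), p.1 ∈ measSupp4 ν := by
      rw [ae_iff]
      have he : {p : Z × W | ¬ p.1 ∈ measSupp4 ν} = (measSupp4 ν)ᶜ ×ˢ Set.univ := by
        ext p; simp [Set.mem_prod]
      rw [he, Measure.prod_prod, measSupp4_compl_null ν, zero_mul]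
    have h2 : ∀ᵐ p ∂(ν.prod μ), p.2 ∈ measSupp4 μ := by
      rw [ae_iff]
      have he : {p : Z × W | ¬ p.2 ∈ measSupp4 μ} = Set.univ ×ˢ (measSupp4 μ)ᶜ := by
        ext p; simp [Set.mem_prod]
      rw [he, Measure.prod_prod, measSupp4_compl_null μ, mul_zero]
    filter_upwards [h1, h2] with p h1 h2 using ⟨h1, h2⟩
  -- `E` agrees a.e. with `F ×ˢ univ`
  have hEiff : ∀ᵐ p ∂(ν.prod μ), p ∈ E ↔ p ∈ F ×ˢ (Set.univ : Set W) := by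
    filter_upwards [hfae, hsupp_ae] with p hp hsp
    have hfg : f p = g p.1 := by
      have h := hconst p.1 hsp.1 p.2 hsp.2
      have hr : g p.1 = f (p.1, w₀) := rfl
      rw [hr, ← h]
    have hg01 : g p.1 = 0 ∨ g p.1 = 1 := by
      have h := h01 (p.1, w₀) (hprodsupp ⟨hsp.1, hw₀⟩)
      have hr : g p.1 = f (p.1, w₀) := rfl
      rw [hr]
      simpa [Set.mem_insert_iff] using h
    constructor
    · intro hpe
      refine ⟨?_, Set.mem_univ _⟩
      have h1 : g p.1 = 1 := by
        rw [← hfg, hp, Set.indicator_of_mem hpe]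
      show (1 : ℝ) / 2 < g p.1
      rw [h1]; norm_num
    · rintro ⟨hpF, -⟩
      have hlt : (1 : ℝ) / 2 < g p.1 := hpF
      rcases hg01 with h | h
      · rw [h] at hlt; norm_num at hlt
      · by_contra hpe
        have h0 : f p = 0 := by rw [hp, Set.indicator_of_notMem hpe]
        rw [hfg, h] at h0; norm_num at h0
  have hEeq : (ν.prod μ) E = (ν.prod μ) (F ×ˢ (Set.univ : Set W)) :=
    measure_congr (Filter.eventuallyEq_set.2 hEiff)
  have hNmeas : MeasurableSet (E ∆ (F ×ˢ (Set.univ : Set W))) :=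
    hE.symmDiff (hFmeas.prod MeasurableSet.univ)
  have hNnull : (ν.prod μ) (E ∆ (F ×ˢ (Set.univ : Set W))) = 0 := by
    refine measure_mono_null ?_ (ae_iff.mp hEiff)
    intro p hp
    rw [Set.mem_symmDiff] at hp
    simp only [Set.mem_setOf_eq]
    rcases hp with ⟨h1, h2⟩ | ⟨h1, h2⟩ <;> tauto
  -- `F` is almost invariant for `P`
  have hPF : ∀ t : ℝ, 0 < t → ∀ᵐ z ∂ν, P t z F = F.indicator (fun _ => (1 : ℝ≥0∞)) z := by
    intro t ht
    have hQN : ∀ᵐ p ∂(ν.prod μ), Q t p (E ∆ (F ×ˢ (Set.univ : Set W))) = 0 := by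
      have hint : ∫⁻ p, Q t p (E ∆ (F ×ˢ (Set.univ : Set W))) ∂(ν.prod μ) = 0 := by
        rw [← Measure.bind_apply hNmeas (Kernel.measurable (Q t)).aemeasurable,
          hprodinv t ht, hNnull]
      have h := (lintegral_eq_zero_iff ((Q t).measurable_coe hNmeas)).mp hint
      exact h.mono fun p hp => hp
    have hmain : ∀ᵐ p ∂(ν.prod μ),
        P t p.1 F = F.indicator (fun _ => (1 : ℝ≥0∞)) p.1 := by
      filter_upwards [hEinv t ht, hQN, hEiff] with p hp hq hiff
      have h1 : Q t p (F ×ˢ (Set.univ : Set W)) = Q t p E := by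
        have hae' : E =ᵐ[Q t p] (F ×ˢ (Set.univ : Set W)) := by
          rw [MeasureTheory.ae_eq_set]
          constructor
          · exact measure_mono_null
              (fun x hx => Set.mem_symmDiff.2 (Or.inl ⟨hx.1, hx.2⟩)) hq
          · exact measure_mono_null
              (fun x hx => Set.mem_symmDiff.2 (Or.inr ⟨hx.1, hx.2⟩)) hq
        exact (measure_congr hae').symm
      have h2 : Q t p (F ×ˢ (Set.univ : Set W)) = P t p.1 F := by
        have hpre : F ×ˢ (Set.univ : Set W) = Prod.fst ⁻¹' F := by
          ext x; simp [Set.mem_prod]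
        rw [hpre, ← Measure.map_apply measurable_fst hFmeas, hproj t ht p]
      rw [← h2, h1, hp]
      by_cases hc : p.1 ∈ F
      · have hpe : p ∈ E := hiff.2 ⟨hc, Set.mem_univ _⟩
        simp [Set.indicator_of_mem, hpe, hc]
      · have hpe : p ∉ E := fun h => hc (hiff.1 h).1
        simp [Set.indicator_of_notMem, hpe, hc]
    -- transfer from the product to `ν`
    have hBmeas : MeasurableSet {z : Z | ¬ P t z F = F.indicator (fun _ => (1 : ℝ≥0∞)) z} := by
      have h1 : Measurable fun z => P t z F := (P t).measurable_coe hFmeas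
      have h2 : Measurable (F.indicator fun _ : Z => (1 : ℝ≥0∞)) :=
        measurable_const.indicator hFmeas
      exact (StronglyMeasurable.measurableSet_eq_fun h1.stronglyMeasurable
        h2.stronglyMeasurable).compl
    rw [ae_iff]
    have hkey : (ν.prod μ)
        (Prod.fst ⁻¹' {z : Z | ¬ P t z F = F.indicator (fun _ => (1 : ℝ≥0∞)) z}) = 0 :=
      ae_iff.mp hmain
    calc ν {z : Z | ¬ P t z F = F.indicator (fun _ => (1 : ℝ≥0∞)) z}
        = ((μ Set.univ) • ν) {z : Z | ¬ P t z F = F.indicator (fun _ => (1 : ℝ≥0∞)) z} := by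
          simp
      _ = ((ν.prod μ).map Prod.fst) {z : Z | ¬ P t z F = F.indicator (fun _ => (1 : ℝ≥0∞)) z} := by
          rw [Measure.map_fst_prod]
      _ = (ν.prod μ) (Prod.fst ⁻¹' {z : Z | ¬ P t z F = F.indicator (fun _ => (1 : ℝ≥0∞)) z}) :=
          Measure.map_apply measurable_fst hBmeas
      _ = 0 := hkey
  rcases hν.2 F hFmeas hPF with h | h
  · left
    rw [hEeq, Measure.prod_prod, h, zero_mul]
  · right
    rw [hEeq, Measure.prod_prod, h, measure_univ, one_mul]
end

section
/- Let (z_t)_t be a strong Feller Markov process on a Polish space Z and let ν be an invariant measure for (z_t)_t whose support is connected. Then ν is ergodic. -/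
open MeasureTheory ProbabilityTheory
open scoped ENNReal

/-- The Markov semigroup `P` (indexed by `t > 0`) is strong Feller: for every bounded
measurable observable `φ` the map `z ↦ ∫ φ d(P t z)` is continuous. -/
def IsStrongFeller5 {Z : Type*} [MeasurableSpace Z] [TopologicalSpace Z]
    (P : ℝ → Kernel Z Z) : Prop :=
  ∀ t : ℝ, 0 < t → ∀ φ : Z → ℝ, Measurable φ → (∃ C, ∀ z, |φ z| ≤ C) →
    Continuous fun z => ∫ y, φ y ∂(P t z)

/-- `m` is invariant for the Markov semigroup `P`. -/
def IsInvariant5 {Z : Type*} [MeasurableSpace Z] (P : ℝ → Kernel Z Z)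
    (m : Measure Z) : Prop :=
  ∀ t : ℝ, 0 < t → m.bind (P t) = m

/-- `m` is ergodic for `P`: every set `E` with `P_t 1_E = 1_E` `m`-a.e. for all `t > 0`
has measure `0` or `1`. -/
def IsErgodic5 {Z : Type*} [MeasurableSpace Z] (P : ℝ → Kernel Z Z)
    (m : Measure Z) : Prop :=
  IsInvariant5 P m ∧
    ∀ E : Set Z, MeasurableSet E →
      (∀ t : ℝ, 0 < t → ∀ᵐ z ∂m, P t z E = E.indicator (fun _ => (1 : ℝ≥0∞)) z) →
      m E = 0 ∨ m E = 1

/-- The topological support of a measure: points all of whose neighbourhoods have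
positive measure. -/
def measSupp5 {Z : Type*} [MeasurableSpace Z] [TopologicalSpace Z] (m : Measure Z) :
    Set Z :=
  {z | ∀ U : Set Z, IsOpen U → z ∈ U → 0 < m U}

/-- A strong Feller Markov process on a Polish space with an invariant
measure whose support is connected has that invariant measure ergodic. -/
theorem stmt5 {Z : Type*} [MeasurableSpace Z] [TopologicalSpace Z] [PolishSpace Z]
    [BorelSpace Z] (P : ℝ → Kernel Z Z) (hP : ∀ t, IsMarkovKernel (P t))
    (hFeller : IsStrongFeller5 P)
    (ν : Measure Z) [IsProbabilityMeasure ν]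
    (hinv : IsInvariant5 P ν) (hconn : IsConnected (measSupp5 ν)) :
    IsErgodic5 P ν := by
  refine ⟨hinv, fun E hE hEinv => ?_⟩
  haveI := hP 1
  set g : Z → ℝ := fun z => ((P 1) z E).toReal with hg
  have hg_cont : Continuous g := by
    have h := hFeller 1 one_pos (E.indicator fun _ => (1:ℝ))
      (measurable_const.indicator hE)
      ⟨1, fun z => by by_cases h : z ∈ E <;> simp [Set.indicator_apply, h]⟩
    have heq : (fun z => ∫ y, E.indicator (fun _ => (1:ℝ)) y ∂((P 1) z)) = g := by
      funext z
      exact integral_indicator_one (μ := (P 1) z) hE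
    rwa [heq] at h
  have hae : ∀ᵐ z ∂ν, g z = E.indicator (fun _ => (1:ℝ)) z := by
    filter_upwards [hEinv 1 one_pos] with z hz
    simp only [hg, hz]
    by_cases h : z ∈ E <;> simp [Set.indicator_apply, h]
  -- a.e. every point lies in the support
  have hsuppc : ν (measSupp5 ν)ᶜ = 0 := by
    apply measure_null_of_locally_null
    intro z hz
    simp only [measSupp5, Set.mem_compl_iff, Set.mem_setOf_eq, not_forall] at hz
    obtain ⟨U, hUo, hzU, hU0⟩ := hz
    exact ⟨U, mem_nhdsWithin_of_mem_nhds (hUo.mem_nhds hzU),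
      le_antisymm (not_lt.mp hU0) zero_le⟩
  have hae_supp : ∀ᵐ z ∂ν, z ∈ measSupp5 ν := by
    rw [MeasureTheory.ae_iff]
    exact hsuppc
  -- on the support, g takes values in {0,1}
  have hV0 : ν (g ⁻¹' ({0, 1} : Set ℝ)ᶜ) = 0 := by
    refine measure_mono_null (fun z hz => ?_) (MeasureTheory.ae_iff.mp hae)
    simp only [Set.mem_compl_iff, Set.mem_preimage, Set.mem_insert_iff,
      Set.mem_singleton_iff, not_or] at hz
    intro hzeq
    by_cases h : z ∈ E
    · exact hz.2 (by simpa [Set.indicator_apply, h] using hzeq)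
    · exact hz.1 (by simpa [Set.indicator_apply, h] using hzeq)
  have hVo : IsOpen (g ⁻¹' ({0, 1} : Set ℝ)ᶜ) :=
    (((Set.finite_singleton (1:ℝ)).insert 0).isClosed.isOpen_compl).preimage hg_cont
  have hsupp01 : ∀ z ∈ measSupp5 ν, g z = 0 ∨ g z = 1 := by
    intro z hz
    by_contra h
    push_neg at h
    have hx := hz _ hVo (by
      simp only [Set.mem_preimage, Set.mem_compl_iff, Set.mem_insert_iff,
        Set.mem_singleton_iff, not_or]
      exact h)
    rw [hV0] at hx
    exact lt_irrefl 0 hx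
  -- connectedness: g is constant on the support
  have hdich : (∀ z ∈ measSupp5 ν, g z = 0) ∨ (∀ z ∈ measSupp5 ν, g z = 1) := by
    by_contra h
    push_neg at h
    obtain ⟨⟨a, ha, ha0⟩, ⟨b, hb, hb1⟩⟩ := h
    have hga : g a = 1 := (hsupp01 a ha).resolve_left ha0
    have hgb : g b = 0 := (hsupp01 b hb).resolve_right hb1
    obtain ⟨z, -, hz1, hz2⟩ := hconn.isPreconnected
      (g ⁻¹' Set.Ioi (1/2)) (g ⁻¹' Set.Iio (1/2))
      (isOpen_Ioi.preimage hg_cont) (isOpen_Iio.preimage hg_cont)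
      (fun z hz => by
        rcases hsupp01 z hz with h0 | h1
        · right; simp [Set.mem_preimage, h0]
        · left; simp [Set.mem_preimage, h1]; norm_num)
      ⟨a, ha, by simp [Set.mem_preimage, hga]; norm_num⟩
      ⟨b, hb, by simp [Set.mem_preimage, hgb]⟩
    simp only [Set.mem_inter_iff, Set.mem_preimage, Set.mem_Ioi, Set.mem_Iio] at hz1 hz2
    linarith
  rcases hdich with h0 | h1
  · left
    have hnm : ∀ᵐ z ∂ν, z ∉ E := by
      filter_upwards [hae, hae_supp] with z hz1 hz2 hzE
      have h3 := h0 z hz2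
      rw [hz1] at h3
      simp [Set.indicator_apply, hzE] at h3
    exact measure_eq_zero_iff_ae_notMem.mpr hnm
  · right
    have hm : ∀ᵐ z ∂ν, z ∈ E := by
      filter_upwards [hae, hae_supp] with z hz1 hz2
      by_contra hzE
      have h3 := h1 z hz2
      rw [hz1] at h3
      simp [Set.indicator_apply, hzE] at h3
    rw [← prob_compl_eq_zero_iff hE]
    refine measure_eq_zero_iff_ae_notMem.mpr ?_
    filter_upwards [hm] with z hz
    simpa using hz
end

section
/- Let Z and W be Polish spaces, (z_t)_t a Markov process on Z and (z_t,w_t)_t a Markov process on Z×W. Let ν be an ergodic invariant measure for (z_t)_t, and let 𝒬 be the convex set of invariant measures μ for (z_t,w_t)_t whose marginal on Z equals ν. If μ is an extreme point of 𝒬, then μ is an ergodic measure for (z_t,w_t)_t. -/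
open MeasureTheory ProbabilityTheory
open scoped ENNReal NNReal

/-- Invariance of a measure under a Markov semigroup indexed by `t > 0`. -/
def IsInvariant6 {X : Type*} [MeasurableSpace X] (P : ℝ → Kernel X X)
    (m : Measure X) : Prop :=
  ∀ t : ℝ, 0 < t → m.bind (P t) = m

/-- Ergodicity of an invariant measure. -/
def IsErgodic6 {X : Type*} [MeasurableSpace X] (P : ℝ → Kernel X X)
    (m : Measure X) : Prop :=
  IsInvariant6 P m ∧
    ∀ E : Set X, MeasurableSet E →
      (∀ t : ℝ, 0 < t → ∀ᵐ x ∂m, P t x E = E.indicator (fun _ => (1 : ℝ≥0∞)) x) →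
      m E = 0 ∨ m E = 1

lemma ennreal_aux6 (a b : ℝ≥0∞) (ha : a ≤ 1) (hb1 : 1 ≤ b) (hb : b ≠ ∞) :
    (1 - a) * (b - 1) + (a * b + 1) = b + a := by
  have ha' : a ≠ ∞ := (lt_of_le_of_lt ha ENNReal.one_lt_top).ne
  lift a to ℝ≥0 using ha'
  lift b to ℝ≥0 using hb
  have ha1 : a ≤ 1 := by exact_mod_cast ha
  have hb1' : 1 ≤ b := by exact_mod_cast hb1
  rw [← ENNReal.coe_one, ← ENNReal.coe_sub, ← ENNReal.coe_sub, ← ENNReal.coe_mul,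
    ← ENNReal.coe_mul, ← ENNReal.coe_add, ← ENNReal.coe_add, ← ENNReal.coe_add]
  congr 1
  apply NNReal.coe_injective
  push_cast [NNReal.coe_sub ha1, NNReal.coe_sub hb1']
  ring

/-- If a set is a.e. invariant for a Markov kernel, the restriction of an invariant
measure to it is again invariant. -/
lemma restrict_bind_eq6 {X : Type*} [MeasurableSpace X]
    (κ : Kernel X X) [IsMarkovKernel κ] (μ : Measure X)
    (hinv : μ.bind κ = μ) (E : Set X) (hE : MeasurableSet E)
    (hind : ∀ᵐ x ∂μ, κ x E = E.indicator (fun _ => (1 : ℝ≥0∞)) x) :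
    (μ.restrict E).bind κ = μ.restrict E := by
  have hEin : ∀ᵐ x ∂μ.restrict E, (κ x) Eᶜ = 0 := by
    filter_upwards [ae_restrict_of_ae hind, ae_restrict_mem hE] with x hx hxE
    have h1 : κ x E = 1 := by simpa [Set.indicator_of_mem hxE] using hx
    have := measure_compl hE (show κ x E ≠ ∞ by simp [h1])
    simp [h1, this]
  have hEout : ∀ᵐ x ∂μ.restrict Eᶜ, (κ x) E = 0 := by
    filter_upwards [ae_restrict_of_ae hind, ae_restrict_mem hE.compl] with x hx hxE
    simpa [Set.indicator_of_notMem hxE] using hx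
  ext A hA
  rw [Measure.bind_apply hA κ.measurable.aemeasurable]
  have h1 : ∫⁻ x, κ x A ∂(μ.restrict E) = ∫⁻ x, κ x (A ∩ E) ∂(μ.restrict E) := by
    refine lintegral_congr_ae ?_
    filter_upwards [hEin] with x hx
    have hdiff : κ x (A \ E) = 0 :=
      le_antisymm (le_trans (measure_mono (Set.diff_subset_compl A E)) hx.le) (zero_le)
    rw [← measure_inter_add_diff A hE, hdiff, add_zero]
  have h2 : ∫⁻ x, κ x (A ∩ E) ∂(μ.restrict Eᶜ) = 0 := by
    have h0 : ∀ᵐ x ∂μ.restrict Eᶜ, κ x (A ∩ E) = 0 := by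
      filter_upwards [hEout] with x hx
      exact le_antisymm (le_trans (measure_mono Set.inter_subset_right) hx.le) (zero_le)
    rw [lintegral_congr_ae h0, lintegral_zero]
  have h3 : ∫⁻ x, κ x (A ∩ E) ∂μ = μ (A ∩ E) := by
    rw [← Measure.bind_apply (hA.inter hE) κ.measurable.aemeasurable, hinv]
  have h4 := lintegral_add_compl (fun x => κ x (A ∩ E)) hE (μ := μ)
  rw [h2, add_zero, h3] at h4
  rw [h1, h4, Measure.restrict_apply hA]

/-- An invariant probability measure absolutely continuous w.r.t. an ergodic
probability measure equals it. -/
lemma eq_of_invariant_ac6 {X : Type*} [MeasurableSpace X]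
    (P : ℝ → Kernel X X) (hP : ∀ t, IsMarkovKernel (P t))
    (ν ρ : Measure X) [IsProbabilityMeasure ν] [IsProbabilityMeasure ρ]
    (hν : IsErgodic6 P ν) (hρ : IsInvariant6 P ρ) (hac : ρ ≪ ν) : ρ = ν := by
  set h := ρ.rnDeriv ν with hh
  have hmeas : Measurable h := Measure.measurable_rnDeriv ρ ν
  have hwd : ν.withDensity h = ρ := Measure.withDensity_rnDeriv_eq ρ ν hac
  have hint : ∫⁻ x, h x ∂ν = 1 := by
    rw [Measure.lintegral_rnDeriv hac]; simp
  have hint_ne : ∫⁻ x, h x ∂ν ≠ ∞ := by rw [hint]; exact ENNReal.one_ne_top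
  have hlt : ∀ᵐ x ∂ν, h x < ∞ := Measure.rnDeriv_lt_top ρ ν
  set F : Set X := {x | 1 < h x} with hF
  have hFmeas : MeasurableSet F := measurableSet_lt measurable_const hmeas
  -- key: F is a.e. invariant
  have hkey : ∀ t : ℝ, 0 < t →
      ∀ᵐ x ∂ν, P t x F = F.indicator (fun _ => (1 : ℝ≥0∞)) x := by
    intro t ht
    haveI := hP t
    set φ : X → ℝ≥0∞ := fun x => P t x F with hφ
    have hφmeas : Measurable φ := (P t).measurable_coe hFmeas
    have hφle : ∀ x, φ x ≤ 1 := fun x => prob_le_one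
    have hνφ : ∫⁻ x, φ x ∂ν = ν F := by
      rw [← Measure.bind_apply hFmeas (P t).measurable.aemeasurable, hν.1 t ht]
    have hρφ : ∫⁻ x, φ x * h x ∂ν = ∫⁻ x in F, h x ∂ν := by
      have e1 : ∫⁻ x, φ x ∂ρ = ρ F := by
        rw [← Measure.bind_apply hFmeas (P t).measurable.aemeasurable, hρ t ht]
      rw [← hwd, lintegral_withDensity_eq_lintegral_mul ν hmeas hφmeas,
        withDensity_apply h hFmeas] at e1
      rw [← e1]
      exact lintegral_congr fun x => mul_comm _ _
    set a := ∫⁻ x in F, φ x * h x ∂ν with ha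
    set b := ∫⁻ x in Fᶜ, φ x * h x ∂ν with hb
    set c := ∫⁻ x in F, φ x ∂ν with hc
    set d := ∫⁻ x in Fᶜ, φ x ∂ν with hd
    have hab : a + b = ∫⁻ x in F, h x ∂ν := by
      rw [ha, hb, lintegral_add_compl _ hFmeas, hρφ]
    have hcd : c + d = ν F := by
      rw [hc, hd, lintegral_add_compl _ hFmeas, hνφ]
    have hbd : b ≤ d := by
      refine setLIntegral_mono' hFmeas.compl fun x hx => ?_
      have hle1 : h x ≤ 1 := le_of_not_gt hx
      calc φ x * h x ≤ φ x * 1 := mul_le_mul_right hle1 _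
        _ = φ x := mul_one _
    have hFh_ne : ∫⁻ x in F, h x ∂ν ≠ ∞ :=
      (lt_of_le_of_lt (setLIntegral_le_lintegral _ _) hint_ne.lt_top).ne
    have ha_ne : a ≠ ∞ := by
      refine (lt_of_le_of_lt ?_ hFh_ne.lt_top).ne
      rw [← hab]; exact le_self_add
    have hc_ne : c ≠ ∞ :=
      (lt_of_le_of_lt (le_trans (setLIntegral_le_lintegral _ _)
        (le_of_eq hνφ)) (measure_lt_top ν F)).ne
    have hd_ne : d ≠ ∞ :=
      (lt_of_le_of_lt (le_trans (setLIntegral_le_lintegral _ _)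
        (le_of_eq hνφ)) (measure_lt_top ν F)).ne
    -- pointwise identity on F
    have hpt : ∀ᵐ x ∂ν.restrict F,
        (1 - φ x) * (h x - 1) + (φ x * h x + 1) = h x + φ x := by
      filter_upwards [ae_restrict_of_ae hlt, ae_restrict_mem hFmeas] with x hxlt hxF
      exact ennreal_aux6 (φ x) (h x) (hφle x) (le_of_lt hxF) hxlt.ne
    set ψ : X → ℝ≥0∞ := fun x => (1 - φ x) * (h x - 1) with hψ
    have hψmeas : Measurable ψ :=
      (measurable_const.sub hφmeas).mul (hmeas.sub measurable_const)
    set XX := ∫⁻ x in F, ψ x ∂ν with hXX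
    have hsum : XX + (a + ν F) = (a + b) + c := by
      have lhs : ∫⁻ x in F, (ψ x + (φ x * h x + 1)) ∂ν = XX + (a + ν F) := by
        rw [lintegral_add_left hψmeas, lintegral_add_left (show Measurable fun x => φ x * h x from hφmeas.mul hmeas)]
        simp [Measure.restrict_apply_univ, hFmeas, hXX, ha]
      have rhs : ∫⁻ x in F, (h x + φ x) ∂ν = (a + b) + c := by
        rw [lintegral_add_left hmeas, hab]
      rw [← lhs, ← rhs]
      exact lintegral_congr_ae hpt
    -- cancel to get XX + d = b
    have hXd : XX + d = b := by
      have e2 : (XX + d) + (a + c) = b + (a + c) := by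
        calc (XX + d) + (a + c) = XX + (a + (c + d)) := by ring
          _ = a + b + c := by rw [hcd]; exact hsum
          _ = b + (a + c) := by ring
      exact (ENNReal.add_left_inj (ENNReal.add_ne_top.mpr ⟨ha_ne, hc_ne⟩)).mp e2
    have hX0 : XX = 0 := by
      have : XX + d ≤ 0 + d := by rw [hXd, zero_add]; exact hbd
      simpa using (ENNReal.add_le_add_iff_right hd_ne).mp this
    -- φ = 1 a.e. on F
    have hφF : ∀ᵐ x ∂ν.restrict F, φ x = 1 := by
      have hz : ψ =ᵐ[ν.restrict F] 0 := (lintegral_eq_zero_iff hψmeas).mp hX0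
      filter_upwards [hz, ae_restrict_mem hFmeas] with x hx hxF
      rcases mul_eq_zero.mp (by simpa using hx) with h1 | h2
      · exact le_antisymm (hφle x) (tsub_eq_zero_iff_le.mp h1)
      · exact absurd (tsub_eq_zero_iff_le.mp h2) (not_le_of_gt hxF)
    -- hence c = ν F and d = 0
    have hcF : c = ν F := by
      rw [hc, lintegral_congr_ae hφF, setLIntegral_one]
    have hd0 : d = 0 := by
      have h2 : c + d = c + 0 := by rw [add_zero, hcd, hcF]
      exact (ENNReal.add_right_inj hc_ne).mp h2
    have hφFc : ∀ᵐ x ∂ν.restrict Fᶜ, φ x = 0 := by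
      have := (lintegral_eq_zero_iff hφmeas).mp hd0
      filter_upwards [this] with x hx
      simpa using hx
    have hin := (ae_restrict_iff' hFmeas).mp hφF
    have hout := (ae_restrict_iff' hFmeas.compl).mp hφFc
    filter_upwards [hin, hout] with x hx1 hx2
    by_cases hxF : x ∈ F
    · rw [Set.indicator_of_mem hxF]; exact hx1 hxF
    · rw [Set.indicator_of_notMem hxF]; exact hx2 hxF
  -- ergodicity applies
  rcases hν.2 F hFmeas hkey with hF0 | hF1
  · -- h ≤ 1 a.e., and ∫ h = 1 forces h = 1 a.e.
    have hle : ∀ᵐ x ∂ν, h x ≤ 1 := by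
      rw [ae_iff]
      have e : {x | ¬ h x ≤ 1} = F := by rw [hF]; ext x; simp
      rw [e]; exact hF0
    have hsub : ∫⁻ x, (1 - h x) ∂ν = 0 := by
      rw [lintegral_sub hmeas hint_ne hle, hint]
      simp
    have hge : ∀ᵐ x ∂ν, 1 ≤ h x := by
      have h0 := (lintegral_eq_zero_iff (measurable_const.sub hmeas)).mp hsub
      filter_upwards [h0] with x hx
      exact tsub_eq_zero_iff_le.mp (by simpa using hx)
    have hone : h =ᵐ[ν] fun _ => 1 := by
      filter_upwards [hle, hge] with x h1 h2
      exact le_antisymm h1 h2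
    rw [← hwd, withDensity_congr_ae hone]
    simp [withDensity_one]
  · -- ν F = 1: contradiction
    exfalso
    have hFc : ν Fᶜ = 0 := by
      rw [measure_compl hFmeas (measure_ne_top ν F), hF1]
      simp
    have hgt : ∀ᵐ x ∂ν, 1 < h x := by
      rw [ae_iff]
      have e : {x | ¬ 1 < h x} = Fᶜ := by rw [hF]; ext x; simp
      rw [e]; exact hFc
    have hge : ∀ᵐ x ∂ν, 1 ≤ h x := hgt.mono fun x hx => hx.le
    have hsub : ∫⁻ x, (h x - 1) ∂ν = 0 := by
      rw [lintegral_sub measurable_const (by simp) hge, hint]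
      simp
    have hle : ∀ᵐ x ∂ν, h x ≤ 1 := by
      have h0 := (lintegral_eq_zero_iff (hmeas.sub measurable_const)).mp hsub
      filter_upwards [h0] with x hx
      exact tsub_eq_zero_iff_le.mp (by simpa using hx)
    have : ∀ᵐ _x ∂ν, False := by
      filter_upwards [hgt, hle] with x h1 h2
      exact absurd h2 (not_le_of_gt h1)
    have h0 : ν Set.univ = 0 := by
      simpa [ae_iff] using this
    simp at h0

/-- Let `Z, W` be Polish spaces, `P` a Markov semigroup on `Z` and `Q`
a Markov semigroup on `Z × W` projecting onto `P`.  Let `ν` be an ergodic measure for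
`P` and let `𝒬` be the convex set of invariant probability measures for `Q` whose
`Z`-marginal is `ν`.  Every extreme point of `𝒬` is an ergodic measure for `Q`. -/
theorem stmt6 {Z W : Type*}
    [MeasurableSpace Z] [TopologicalSpace Z] [PolishSpace Z] [BorelSpace Z]
    [MeasurableSpace W] [TopologicalSpace W] [PolishSpace W] [BorelSpace W]
    (P : ℝ → Kernel Z Z) (Q : ℝ → Kernel (Z × W) (Z × W))
    (hP : ∀ t, IsMarkovKernel (P t)) (hQ : ∀ t, IsMarkovKernel (Q t))
    (hproj : ∀ t : ℝ, 0 < t → ∀ p : Z × W, (Q t p).map Prod.fst = P t p.1)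
    (ν : Measure Z) [IsProbabilityMeasure ν] (hν : IsErgodic6 P ν)
    (𝒬 : Set (Measure (Z × W)))
    (h𝒬 : 𝒬 = {m | IsProbabilityMeasure m ∧ IsInvariant6 Q m ∧ m.map Prod.fst = ν})
    (μ : Measure (Z × W)) (hμ𝒬 : μ ∈ 𝒬)
    (hextreme : ∀ μ₁ ∈ 𝒬, ∀ μ₂ ∈ 𝒬, ∀ t : ℝ≥0∞, 0 < t → t < 1 →
      μ = (1 - t) • μ₁ + t • μ₂ → μ₁ = μ₂) :
    IsErgodic6 Q μ := by
  rw [h𝒬] at hμ𝒬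
  obtain ⟨hμprob, hμinv, hμmarg⟩ := hμ𝒬
  haveI := hμprob
  refine ⟨hμinv, ?_⟩
  intro E hE hEind
  by_contra hcon
  push_neg at hcon
  obtain ⟨hE0, hE1⟩ := hcon
  set s := μ E with hs
  have hsne : s ≠ ∞ := measure_ne_top μ E
  have hs1 : s ≤ 1 := prob_le_one
  have hslt : s < 1 := lt_of_le_of_ne hs1 hE1
  have hs0 : 0 < s := pos_iff_ne_zero.mpr hE0
  have h1s : μ Eᶜ = 1 - s := by
    rw [measure_compl hE hsne]; simp [hs]
  have h1s0 : (1 : ℝ≥0∞) - s ≠ 0 := by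
    simp only [ne_eq, tsub_eq_zero_iff_le, not_le]; exact hslt
  have h1sne : (1 : ℝ≥0∞) - s ≠ ∞ := (lt_of_le_of_lt tsub_le_self ENNReal.one_lt_top).ne
  -- indicator condition for the complement
  have hEindc : ∀ t : ℝ, 0 < t →
      ∀ᵐ x ∂μ, Q t x Eᶜ = Eᶜ.indicator (fun _ => (1 : ℝ≥0∞)) x := by
    intro t ht
    haveI := hQ t
    filter_upwards [hEind t ht] with x hx
    by_cases hxE : x ∈ E
    · rw [Set.indicator_of_mem hxE] at hx
      rw [measure_compl hE (by simp [hx]), hx,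
        Set.indicator_of_notMem (by simpa using hxE)]
      simp
    · rw [Set.indicator_of_notMem hxE] at hx
      rw [measure_compl hE (by simp [hx]), hx,
        Set.indicator_of_mem (by simpa using hxE)]
      simp
  -- generic membership lemma
  have hmem : ∀ E' : Set (Z × W), MeasurableSet E' →
      (∀ t : ℝ, 0 < t → ∀ᵐ x ∂μ, Q t x E' = E'.indicator (fun _ => (1 : ℝ≥0∞)) x) →
      μ E' ≠ 0 →
      (μ E')⁻¹ • μ.restrict E' ∈
        {m : Measure (Z × W) | IsProbabilityMeasure m ∧ IsInvariant6 Q m ∧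
          m.map Prod.fst = ν} := by
    intro E' hE' hind' hne0
    have hneT : μ E' ≠ ∞ := measure_ne_top μ E'
    set m := (μ E')⁻¹ • μ.restrict E' with hm
    have hmprob : IsProbabilityMeasure m := by
      constructor
      rw [hm, Measure.smul_apply, Measure.restrict_apply_univ, smul_eq_mul]
      exact ENNReal.inv_mul_cancel hne0 hneT
    have hminv : IsInvariant6 Q m := by
      intro t ht
      haveI := hQ t
      have hres := restrict_bind_eq6 (Q t) μ (hμinv t ht) E' hE' (hind' t ht)
      ext A hA
      rw [hm, Measure.bind_apply hA (Q t).measurable.aemeasurable, Measure.smul_apply,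
        lintegral_smul_measure, ← Measure.bind_apply hA (Q t).measurable.aemeasurable, hres]
    have hmmarg : m.map Prod.fst = ν := by
      haveI : IsProbabilityMeasure (m.map Prod.fst) :=
        Measure.isProbabilityMeasure_map measurable_fst.aemeasurable
      refine eq_of_invariant_ac6 P hP ν (m.map Prod.fst) hν ?_ ?_
      · -- invariance of the marginal
        intro t ht
        haveI := hP t
        haveI := hQ t
        ext A hA
        rw [Measure.bind_apply hA (P t).measurable.aemeasurable,
          lintegral_map ((P t).measurable_coe hA) measurable_fst]
        have hcongr : ∀ p : Z × W, P t p.1 A = Q t p (Prod.fst ⁻¹' A) := by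
          intro p
          rw [← hproj t ht p, Measure.map_apply measurable_fst hA]
        rw [lintegral_congr fun p => hcongr p,
          ← Measure.bind_apply (hA.preimage measurable_fst) (Q t).measurable.aemeasurable,
          hminv t ht, Measure.map_apply measurable_fst hA]
      · -- absolute continuity
        refine Measure.AbsolutelyContinuous.mk fun A hA hA0 => ?_
        rw [Measure.map_apply measurable_fst hA, hm, Measure.smul_apply,
          Measure.restrict_apply (hA.preimage measurable_fst), smul_eq_mul]
        have hA0p : μ (Prod.fst ⁻¹' A) = 0 := by
          have : μ.map Prod.fst A = 0 := by rw [hμmarg, hA0]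
          rwa [Measure.map_apply measurable_fst hA] at this
        rw [le_antisymm (le_trans (measure_mono Set.inter_subset_left) hA0p.le)
          (zero_le), mul_zero]
    exact ⟨hmprob, hminv, hmmarg⟩
  -- build the two measures
  set μ₁ := s⁻¹ • μ.restrict E with hμ₁
  set μ₂ := ((1 : ℝ≥0∞) - s)⁻¹ • μ.restrict Eᶜ with hμ₂
  have hμ₁mem : μ₁ ∈ 𝒬 := by
    rw [h𝒬]; exact hmem E hE hEind hE0
  have hμ₂mem : μ₂ ∈ 𝒬 := by
    rw [h𝒬, hμ₂, ← h1s]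
    exact hmem Eᶜ hE.compl hEindc (by rw [h1s]; exact h1s0)
  have hdecomp : μ = (1 - s) • μ₂ + s • μ₁ := by
    rw [hμ₁, hμ₂, smul_smul, smul_smul,
      ENNReal.mul_inv_cancel h1s0 h1sne, ENNReal.mul_inv_cancel hE0 hsne,
      one_smul, one_smul, add_comm, Measure.restrict_add_restrict_compl hE]
  have heq := hextreme μ₂ hμ₂mem μ₁ hμ₁mem s hs0 hslt hdecomp
  have h2E : μ₂ E = 0 := by
    rw [hμ₂, Measure.smul_apply, Measure.restrict_apply hE]
    simp
  have h1E : μ₁ E = 1 := by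
    rw [hμ₁, Measure.smul_apply, Measure.restrict_apply hE, Set.inter_self,
      smul_eq_mul, ENNReal.inv_mul_cancel hE0 hsne]
  rw [heq, h1E] at h2E
  exact one_ne_zero h2E
end

section
/- Let 𝒵_L be the set of pairs (k,ℓ) with k ∈ ℤ³ \ {0}, |k|_∞ = 1, ℓ ∈ {1,2} (with only ℓ = 1 allowed when k_z = 0), and for z ∈ (0,1) define φ_{(k,ℓ)}(z) = γ^{(u)}_{(k,ℓ)} − β^{(u)}_{(k,ℓ)} cos(2π k_z z) ∈ ℝ³, where γ^{(u)}_{(k,ℓ)} = (γ_{(k,ℓ)}, γ^{(w)}_{(k,ℓ)}), β^{(u)}_{(k,ℓ)} = (0,0,γ^{(w)}_{(k,ℓ)}), γ^{(w)}_{(k,ℓ)} = −k_z^{-1}(k_x,k_y)·a_ℓ for k_z ≠ 0 and 0 otherwise, and γ_{(k,ℓ)} = a_ℓ for k_z ≠ 0. Then for all h ∈ ℝ³ and z ∈ (0,1): max_{(k,ℓ)∈𝒵_L} |⟨φ_{(k,ℓ)}(z), h⟩| ≳ (z² ∧ (1−z)²) |h|, with an implicit constant independent of z and h. -/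
open Matrix Real

/-- The sign `sign(k) ∈ {±1}` attached to a partition `ℤ³₀ = ℤ³₊ ∪ ℤ³₋` (here the
lexicographic choice), with `sign(−k) = −sign(k)`. -/
noncomputable def sgn13 (k : Fin 3 → ℤ) : ℝ :=
  if 0 < k 0 ∨ (k 0 = 0 ∧ (0 < k 1 ∨ (k 1 = 0 ∧ 0 < k 2))) then 1 else -1

/-- The horizontal part `γ_{(k,ℓ)}`: `a_ℓ` for `k_z ≠ 0`, and `sign(k) k^⊥ / |k|` for
`k_z = 0` (indices `ℓ = 0, 1` correspond to `ℓ = 1, 2`). -/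
noncomputable def gammaH13 (k : Fin 3 → ℤ) (ℓ : Fin 2) : Fin 2 → ℝ :=
  if k 2 = 0 then
    (sgn13 k / Real.sqrt (((k 0 : ℝ)) ^ 2 + ((k 1 : ℝ)) ^ 2)) • ![(k 1 : ℝ), -(k 0 : ℝ)]
  else if ℓ = 0 then ![1, 0] else ![0, 1]

/-- The vertical coefficient `γ^{(w)}_{(k,ℓ)} = −k_z⁻¹ (k_x,k_y)·a_ℓ` for `k_z ≠ 0`,
and `0` otherwise. -/
noncomputable def gammaW13 (k : Fin 3 → ℤ) (ℓ : Fin 2) : ℝ :=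
  if k 2 = 0 then 0
  else -((k 0 : ℝ) * (if ℓ = 0 then 1 else 0) + (k 1 : ℝ) * (if ℓ = 0 then 0 else 1)) /
    (k 2 : ℝ)

/-- `φ_{(k,ℓ)}(z) = γ^{(u)}_{(k,ℓ)} − β^{(u)}_{(k,ℓ)} cos(2π k_z z)`, where
`γ^{(u)} = (γ_{(k,ℓ)}, γ^{(w)})` and `β^{(u)} = (0,0,γ^{(w)})`. -/
noncomputable def phi13 (k : Fin 3 → ℤ) (ℓ : Fin 2) (z : ℝ) : Fin 3 → ℝ :=
  ![gammaH13 k ℓ 0, gammaH13 k ℓ 1,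
    gammaW13 k ℓ * (1 - Real.cos (2 * Real.pi * (k 2 : ℝ) * z))]

/-- The low-mode index set `𝒵_L`: pairs `(k,ℓ)` with `k ∈ ℤ³ \ {0}`, `|k|_∞ = 1`,
`ℓ ∈ {0,1}`, and only `ℓ = 0` allowed when `k_z = 0`. -/
def ZL13 : Set ((Fin 3 → ℤ) × Fin 2) :=
  {p | p.1 ≠ 0 ∧ (∀ i, |p.1 i| ≤ 1) ∧ (p.1 2 = 0 → p.2 = 0)}

lemma key_cos (z : ℝ) (hz : z ∈ Set.Ioo (0:ℝ) 1) :
    8 * min (z ^ 2) ((1 - z) ^ 2) ≤ 1 - Real.cos (2 * Real.pi * z) := by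
  obtain ⟨hz0, hz1⟩ := hz
  have h2 : Real.cos (2 * (Real.pi * z)) = 1 - 2 * Real.sin (Real.pi * z) ^ 2 := by
    have h1 := Real.cos_two_mul' (Real.pi * z)
    have h0 := Real.sin_sq_add_cos_sq (Real.pi * z)
    linarith
  have hsin : 2 * min z (1 - z) ≤ Real.sin (Real.pi * z) := by
    rcases le_total z (1 - z) with h | h
    · have hx : Real.pi * z ≤ Real.pi / 2 := by nlinarith [Real.pi_pos]
      have := Real.mul_le_sin (x := Real.pi * z) (by positivity) hx
      rw [min_eq_left h]
      calc 2 * z = 2 / Real.pi * (Real.pi * z) := by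
            field_simp
        _ ≤ _ := this
    · have hx : Real.pi * (1 - z) ≤ Real.pi / 2 := by nlinarith [Real.pi_pos]
      have h1 : Real.sin (Real.pi * z) = Real.sin (Real.pi * (1 - z)) := by
        rw [show Real.pi * (1 - z) = Real.pi - Real.pi * z by ring, Real.sin_pi_sub]
      have := Real.mul_le_sin (x := Real.pi * (1 - z)) (by nlinarith [Real.pi_pos]) hx
      rw [min_eq_right h, h1]
      calc 2 * (1 - z) = 2 / Real.pi * (Real.pi * (1 - z)) := by
            field_simp
        _ ≤ _ := this
  have hmin0 : 0 ≤ min z (1 - z) := le_min hz0.le (by linarith)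
  have hsq : 4 * min z (1 - z) ^ 2 ≤ Real.sin (Real.pi * z) ^ 2 := by
    nlinarith
  have hminsq : min (z ^ 2) ((1 - z) ^ 2) = min z (1 - z) ^ 2 := by
    rcases le_total z (1 - z) with h | h
    · rw [min_eq_left h, min_eq_left (by nlinarith)]
    · rw [min_eq_right h, min_eq_right (by nlinarith)]
  have : 2 * Real.pi * z = 2 * (Real.pi * z) := by ring
  rw [this, h2, hminsq]
  linarith

lemma min_sq_le (z : ℝ) (hz : z ∈ Set.Ioo (0:ℝ) 1) :
    min (z ^ 2) ((1 - z) ^ 2) ≤ 1 / 4 := by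
  obtain ⟨hz0, hz1⟩ := hz
  rcases le_total z (1/2) with h | h
  · exact le_trans (min_le_left _ _) (by nlinarith)
  · exact le_trans (min_le_right _ _) (by nlinarith)

/-- Quantitative spanning estimate: there is a constant `c > 0` such
that for all `h ∈ ℝ³` and `z ∈ (0,1)`,
`max_{(k,ℓ) ∈ 𝒵_L} |⟨φ_{(k,ℓ)}(z), h⟩| ≥ c (z² ∧ (1−z)²) |h|`. -/
theorem stmt13 :
    ∃ c : ℝ, 0 < c ∧
      ∀ z ∈ Set.Ioo (0 : ℝ) 1, ∀ h : Fin 3 → ℝ,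
        ∃ p ∈ ZL13, c * min (z ^ 2) ((1 - z) ^ 2) * ‖h‖ ≤ |phi13 p.1 p.2 z ⬝ᵥ h| := by
  refine ⟨4, by norm_num, fun z hz h => ?_⟩
  set m := min (z ^ 2) ((1 - z) ^ 2) with hm
  have hm0 : 0 < m := lt_min (by nlinarith [hz.1]) (by nlinarith [hz.2])
  have hm4 : m ≤ 1 / 4 := min_sq_le z hz
  set t := 1 - Real.cos (2 * Real.pi * z) with ht
  have htm : 8 * m ≤ t := key_cos z hz
  -- the three candidate modes
  set p1 : (Fin 3 → ℤ) × Fin 2 := (![0, 1, 1], 0) with hp1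
  set p2 : (Fin 3 → ℤ) × Fin 2 := (![1, 0, 1], 1) with hp2
  set p3 : (Fin 3 → ℤ) × Fin 2 := (![1, 0, 1], 0) with hp3
  have mem1 : p1 ∈ ZL13 := by
    refine ⟨fun hc => ?_, fun i => by fin_cases i <;> simp [hp1], by simp [hp1]⟩
    have := congrFun hc 1
    simp [hp1] at this
  have mem2 : p2 ∈ ZL13 := by
    refine ⟨fun hc => ?_, fun i => by fin_cases i <;> simp [hp2], by simp [hp2]⟩
    have := congrFun hc 0
    simp [hp2] at this
  have mem3 : p3 ∈ ZL13 := by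
    refine ⟨fun hc => ?_, fun i => by fin_cases i <;> simp [hp3], by simp [hp3]⟩
    have := congrFun hc 0
    simp [hp3] at this
  have d1 : phi13 p1.1 p1.2 z ⬝ᵥ h = h 0 := by
    simp [hp1, phi13, gammaH13, gammaW13, Matrix.cons_dotProduct, Matrix.vecHead, Matrix.vecTail]
  have d2 : phi13 p2.1 p2.2 z ⬝ᵥ h = h 1 := by
    simp [hp2, phi13, gammaH13, gammaW13, Matrix.cons_dotProduct, Matrix.vecHead, Matrix.vecTail]
  have d3 : phi13 p3.1 p3.2 z ⬝ᵥ h = h 0 - t * h 2 := by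
    simp [hp3, phi13, gammaH13, gammaW13, Matrix.cons_dotProduct, Matrix.vecHead, Matrix.vecTail, ht]
    ring
  set M := max (max |h 0| |h 1|) |h 0 - t * h 2| with hM
  have hM0 : |h 0| ≤ M := le_trans (le_max_left _ _) (le_max_left _ _)
  have hM1 : |h 1| ≤ M := le_trans (le_max_right _ _) (le_max_left _ _)
  have hM2 : |h 0 - t * h 2| ≤ M := le_max_right _ _
  have hnorm : ‖h‖ ≤ M / (4 * m) := by
    rw [pi_norm_le_iff_of_nonneg (by positivity)]
    intro i
    have hMnn : 0 ≤ M := le_trans (abs_nonneg _) hM0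
    fin_cases i
    · show ‖h 0‖ ≤ M / (4 * m)
      rw [Real.norm_eq_abs, le_div_iff₀ (by positivity)]
      nlinarith [abs_nonneg (h 0)]
    · show ‖h 1‖ ≤ M / (4 * m)
      rw [Real.norm_eq_abs, le_div_iff₀ (by positivity)]
      nlinarith [abs_nonneg (h 1)]
    · show ‖h 2‖ ≤ M / (4 * m)
      rw [Real.norm_eq_abs, le_div_iff₀ (by positivity)]
      have h2b : t * |h 2| ≤ 2 * M := by
        have : |t * h 2| ≤ |h 0 - t * h 2| + |h 0| := by
          have := abs_sub (h 0) (t * h 2)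
          calc |t * h 2| = |h 0 - (h 0 - t * h 2)| := by ring_nf
            _ ≤ |h 0| + |h 0 - t * h 2| := abs_sub _ _
            _ = |h 0 - t * h 2| + |h 0| := by ring
        rw [abs_mul, abs_of_nonneg (by linarith : (0:ℝ) ≤ t)] at this
        linarith
      nlinarith [abs_nonneg (h 2)]
  have hfin : 4 * m * ‖h‖ ≤ M := by
    have := mul_le_mul_of_nonneg_left hnorm (by positivity : (0:ℝ) ≤ 4 * m)
    calc 4 * m * ‖h‖ ≤ 4 * m * (M / (4 * m)) := this
      _ = M := by field_simp
  rcases le_total (max |h 0| |h 1|) |h 0 - t * h 2| with hc | hc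
  · exact ⟨p3, mem3, by rw [d3]; rw [hM, max_eq_right hc] at hfin; exact hfin⟩
  · rcases le_total |h 0| |h 1| with hc2 | hc2
    · refine ⟨p2, mem2, ?_⟩
      rw [d2]
      rw [hM, max_eq_left hc, max_eq_right hc2] at hfin
      exact hfin
    · refine ⟨p1, mem1, ?_⟩
      rw [d1]
      rw [hM, max_eq_left hc, max_eq_left hc2] at hfin
      exact hfin
end
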